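/- Let V be a finite-dimensional vector space over ℚ. Let (x₀⁽¹⁾; e₁⁽¹⁾, …) , …, (x₀⁽ᵏ⁾; e₁⁽ᵏ⁾, …) and (y₀⁽¹⁾; f₁⁽¹⁾, …), …, (y₀⁽ˡ⁾; f₁⁽ˡ⁾, …) be two finite families of simple-sector data in V such that the simple sectors in each family are pairwise disjoint and such that the union of the first family equals the union of the second family. Then in the fraction field ℚ(V) of the group algebra ℚ[V] one has ∑_{i=1}^{k} S(x₀⁽ⁱ⁾; e⁽ⁱ⁾) = ∑_{j=1}^{l} S(y₀⁽ʲ⁾; f⁽ʲ⁾). -/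

import Mathlib

/-- The group algebra `ℚ[V]` of a ℚ-vector space `V` is an integral domain
(it has no zero divisors since `V` has unique sums, being torsion-free). -/
instance (V : Type*) [AddCommGroup V] [Module ℚ V] : IsDomain (AddMonoidAlgebra ℚ V) :=
  NoZeroDivisors.to_isDomain _

/-- The simple sector associated to a datum `(x₀; e₁, …, e_m)`:
the set `{x₀ + a₁e₁ + ⋯ + a_m e_m : aᵢ ∈ ℤ, aᵢ ≥ 0}`. -/
def simpleSector {V : Type*} [AddCommGroup V] [Module ℚ V] {m : ℕ}
    (x₀ : V) (e : Fin m → V) : Set V :=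
  {y | ∃ a : Fin m → ℕ, y = x₀ + ∑ i, a i • e i}

/-- The element `S(x₀; e) = e^{x₀} / ∏ᵢ (1 − e^{eᵢ})` of the fraction field `ℚ(V)`
of the group algebra `ℚ[V]` associated to a simple-sector datum `(x₀; e₁, …, e_m)`. -/
noncomputable def Sfrac {V : Type*} [AddCommGroup V] [Module ℚ V] {m : ℕ}
    (x₀ : V) (e : Fin m → V) : FractionRing (AddMonoidAlgebra ℚ V) :=
  algebraMap (AddMonoidAlgebra ℚ V) (FractionRing (AddMonoidAlgebra ℚ V))
      (AddMonoidAlgebra.single x₀ 1) /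
    ∏ i, (1 - algebraMap (AddMonoidAlgebra ℚ V) (FractionRing (AddMonoidAlgebra ℚ V))
      (AddMonoidAlgebra.single (e i) 1))

set_option linter.unusedSectionVars false
set_option linter.unusedTactic false

section Aux
variable {V : Type*} [AddCommGroup V] [Module ℚ V]

open AddMonoidAlgebra

/-- Convolution action of the group algebra on arbitrary functions `V → ℚ`. -/
noncomputable def actQ (r : AddMonoidAlgebra ℚ V) (h : V → ℚ) : V → ℚ :=
  fun v => r.coeff.sum fun u c => c * h (v - u)

lemma actQ_zero_left (h : V → ℚ) : actQ (0 : AddMonoidAlgebra ℚ V) h = 0 := by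
  funext v; simp [actQ]

lemma actQ_add_left (r r' : AddMonoidAlgebra ℚ V) (h : V → ℚ) :
    actQ (r + r') h = actQ r h + actQ r' h := by
  funext v
  exact Finsupp.sum_add_index' (fun a => zero_mul _) (fun a b₁ b₂ => add_mul _ _ _)

lemma actQ_sub_left (r r' : AddMonoidAlgebra ℚ V) (h : V → ℚ) :
    actQ (r - r') h = actQ r h - actQ r' h := by
  funext v
  exact Finsupp.sum_sub_index (fun a b₁ b₂ => sub_mul _ _ _)

lemma actQ_single (x : V) (c : ℚ) (h : V → ℚ) :
    actQ (AddMonoidAlgebra.single x c) h = fun v => c * h (v - x) := by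
  funext v
  exact Finsupp.sum_single_index (zero_mul _)

lemma actQ_one (h : V → ℚ) : actQ (1 : AddMonoidAlgebra ℚ V) h = h := by
  rw [AddMonoidAlgebra.one_def, actQ_single]; funext v; simp

lemma actQ_zero_right (r : AddMonoidAlgebra ℚ V) : actQ r (0 : V → ℚ) = 0 := by
  funext v; simp [actQ]

lemma actQ_add_right (r : AddMonoidAlgebra ℚ V) (h h' : V → ℚ) :
    actQ r (h + h') = actQ r h + actQ r h' := by
  funext v
  simp [actQ, mul_add, Finsupp.sum_add]

lemma actQ_mul (r r' : AddMonoidAlgebra ℚ V) (h : V → ℚ) :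
    actQ (r * r') h = actQ r (actQ r' h) := by
  induction r using AddMonoidAlgebra.induction_linear with
  | zero => simp [actQ_zero_left]
  | add f g hf hg => rw [add_mul, actQ_add_left, hf, hg, actQ_add_left]
  | single a b =>
    induction r' using AddMonoidAlgebra.induction_linear with
    | zero =>
      simp only [mul_zero, actQ_zero_left]
      rw [actQ_zero_right]
    | add f g hf hg =>
      rw [mul_add, actQ_add_left, hf, hg, actQ_add_left, actQ_add_right]
    | single a' b' =>
      rw [AddMonoidAlgebra.single_mul_single, actQ_single, actQ_single, actQ_single]
      funext v
      rw [show v - (a + a') = v - a - a' by abel]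
      ring

open Classical in
/-- Dirac delta at a point. -/
noncomputable def deltaQ (x : V) : V → ℚ := fun v => if v = x then 1 else 0

lemma actQ_coeff (r : AddMonoidAlgebra ℚ V) :
    actQ r (deltaQ 0) = fun v => r.coeff v := by
  classical
  induction r using AddMonoidAlgebra.induction_linear with
  | zero => rw [actQ_zero_left]; funext v; simp
  | add f g hf hg =>
    rw [actQ_add_left, hf, hg]; funext v; simp
  | single a b =>
    rw [actQ_single]; funext v
    rw [AddMonoidAlgebra.coeff_single, Finsupp.single_apply]
    simp only [deltaQ]
    by_cases hv : v = a
    · subst hv; simp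
    · rw [if_neg (sub_ne_zero.mpr hv), if_neg (fun h => hv h.symm)]; ring

lemma actQ_single_delta (x : V) :
    actQ (AddMonoidAlgebra.single x (1:ℚ)) (deltaQ 0) = deltaQ x := by
  rw [actQ_single]; funext v
  simp only [deltaQ, one_mul]
  by_cases hv : v = x
  · rw [if_pos (by rw [hv, sub_self]), if_pos hv]
  · rw [if_neg (sub_ne_zero.mpr hv), if_neg hv]

lemma actQ_sum_right {ι : Type*} (r : AddMonoidAlgebra ℚ V) (s : Finset ι)
    (h : ι → V → ℚ) (v : V) :
    actQ r (fun w => ∑ i ∈ s, h i w) v = ∑ i ∈ s, actQ r (h i) v := by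
  simp only [actQ, Finsupp.sum, Finset.mul_sum]
  exact Finset.sum_comm

open Classical in
/-- Indicator function of a simple sector. -/
noncomputable def indS {m : ℕ} (x₀ : V) (e : Fin m → V) : V → ℚ :=
  fun v => if v ∈ simpleSector x₀ e then 1 else 0

lemma rep_unique {m : ℕ} {e : Fin m → V} (he : LinearIndependent ℚ e)
    {x₀ : V} (a b : Fin m → ℕ)
    (h : x₀ + ∑ i, a i • e i = x₀ + ∑ i, b i • e i) : a = b := by
  have h' : ∑ i, ((a i : ℚ) - (b i : ℚ)) • e i = 0 := by
    have h2 : ∑ i, a i • e i = ∑ i, b i • e i := add_left_cancel h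
    simp only [sub_smul]
    rw [Finset.sum_sub_distrib]
    simp only [Nat.cast_smul_eq_nsmul]
    rw [h2, sub_self]
  have := Fintype.linearIndependent_iff.mp he _ h'
  funext i
  have hi := this i
  exact_mod_cast sub_eq_zero.mp hi

lemma sector_shift_mem {m : ℕ} (x₀ : V) (e : Fin (m+1) → V) (v : V)
    (hv : v - e 0 ∈ simpleSector x₀ e) : v ∈ simpleSector x₀ e := by
  classical
  obtain ⟨b, hb⟩ := hv
  refine ⟨fun i => b i + (if i = 0 then 1 else 0), ?_⟩
  have hv2 : v = x₀ + ∑ i, b i • e i + e 0 := by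
    rw [← hb]; abel
  rw [hv2]
  simp only [add_smul, ite_smul, one_smul, zero_smul, Finset.sum_add_distrib]
  rw [Finset.sum_ite_eq' Finset.univ (0 : Fin (m+1)) (fun i => e i)]
  simp [add_assoc]

end Aux

section Aux2
variable {V : Type*} [AddCommGroup V] [Module ℚ V]

lemma tail_subset {m : ℕ} (x₀ : V) (e : Fin (m+1) → V) {v : V}
    (hv : v ∈ simpleSector x₀ (e ∘ Fin.succ)) : v ∈ simpleSector x₀ e := by
  obtain ⟨c, hc⟩ := hv
  refine ⟨Fin.cases 0 c, ?_⟩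
  rw [hc, Fin.sum_univ_succ]
  simp

lemma tail_not_shift {m : ℕ} (x₀ : V) (e : Fin (m+1) → V)
    (he : LinearIndependent ℚ e) {v : V}
    (hv : v ∈ simpleSector x₀ (e ∘ Fin.succ)) : v - e 0 ∉ simpleSector x₀ e := by
  classical
  intro hB
  obtain ⟨b, hb⟩ := hB
  obtain ⟨c, hc⟩ := hv
  have hv2 : v = x₀ + ∑ i, (fun i => b i + (if i = 0 then 1 else 0)) i • e i := by
    have hv3 : v = x₀ + ∑ i, b i • e i + e 0 := by rw [← hb]; abel
    rw [hv3]
    simp only [add_smul, ite_smul, one_smul, zero_smul, Finset.sum_add_distrib]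
    rw [Finset.sum_ite_eq' Finset.univ (0 : Fin (m+1)) (fun i => e i)]
    simp [add_assoc]
  have hv4 : v = x₀ + ∑ i, (Fin.cases 0 c : Fin (m+1) → ℕ) i • e i := by
    rw [hc, Fin.sum_univ_succ]
    simp
  have := rep_unique he _ _ (hv4.symm.trans hv2)
  have h0 := congrFun this 0
  simp at h0

lemma mem_shift_of_pos {m : ℕ} (x₀ : V) (e : Fin (m+1) → V) {v : V}
    (a : Fin (m+1) → ℕ) (ha : v = x₀ + ∑ i, a i • e i) (ha0 : a 0 ≠ 0) :
    v - e 0 ∈ simpleSector x₀ e := by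
  refine ⟨Fin.cases (a 0 - 1) (fun i => a i.succ), ?_⟩
  have key : ∑ i, a i • e i =
      (∑ i, (Fin.cases (a 0 - 1) (fun i => a i.succ) : Fin (m+1) → ℕ) i • e i) + e 0 := by
    rw [Fin.sum_univ_succ, Fin.sum_univ_succ]
    simp only [Fin.cases_zero, Fin.cases_succ]
    conv_lhs => rw [show a 0 = (a 0 - 1) + 1 from
      (Nat.succ_pred_eq_of_pos (Nat.pos_of_ne_zero ha0)).symm]
    rw [succ_nsmul]
    abel
  rw [ha, key]
  abel

lemma mem_tail_of_zero {m : ℕ} (x₀ : V) (e : Fin (m+1) → V) {v : V}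
    (a : Fin (m+1) → ℕ) (ha : v = x₀ + ∑ i, a i • e i) (ha0 : a 0 = 0) :
    v ∈ simpleSector x₀ (e ∘ Fin.succ) := by
  refine ⟨fun i => a i.succ, ?_⟩
  rw [ha, Fin.sum_univ_succ, ha0]
  simp

lemma actQ_peel {m : ℕ} (x₀ : V) (e : Fin (m+1) → V) (he : LinearIndependent ℚ e) :
    actQ (1 - AddMonoidAlgebra.single (e 0) (1:ℚ)) (indS x₀ e) = indS x₀ (e ∘ Fin.succ) := by
  rw [actQ_sub_left, actQ_one, actQ_single]
  funext v
  simp only [Pi.sub_apply, one_mul, indS]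
  by_cases hB : v - e 0 ∈ simpleSector x₀ e
  · have hA : v ∈ simpleSector x₀ e := sector_shift_mem x₀ e v hB
    have hT : v ∉ simpleSector x₀ (e ∘ Fin.succ) := fun hT => tail_not_shift x₀ e he hT hB
    rw [if_pos hA, if_pos hB, if_neg hT]; ring
  · by_cases hA : v ∈ simpleSector x₀ e
    · obtain ⟨a, ha⟩ := hA
      have ha0 : a 0 = 0 := by
        by_contra h0
        exact hB (mem_shift_of_pos x₀ e a ha h0)
      have hT : v ∈ simpleSector x₀ (e ∘ Fin.succ) := mem_tail_of_zero x₀ e a ha ha0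
      rw [if_pos ⟨a, ha⟩, if_neg hB, if_pos hT]; ring
    · have hT : v ∉ simpleSector x₀ (e ∘ Fin.succ) := fun hT => hA (tail_subset x₀ e hT)
      rw [if_neg hA, if_neg hB, if_neg hT]; ring

lemma actQ_prod_ind : ∀ {m : ℕ} (x₀ : V) (e : Fin m → V), LinearIndependent ℚ e →
    actQ (∏ s, (1 - AddMonoidAlgebra.single (e s) (1:ℚ))) (indS x₀ e) = deltaQ x₀ := by
  intro m
  induction m with
  | zero =>
    intro x₀ e _
    rw [Finset.univ_eq_empty, Finset.prod_empty, actQ_one]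
    funext v
    simp only [indS, deltaQ]
    rw [show (v ∈ simpleSector x₀ e) = ∃ a : Fin 0 → ℕ, v = x₀ + ∑ i, a i • e i from rfl]
    by_cases hv : v = x₀
    · rw [if_pos (show ∃ a : Fin 0 → ℕ, v = x₀ + ∑ i, a i • e i from
        ⟨fun _ => 0, by simpa using hv⟩), if_pos hv]
    · rw [if_neg (show ¬∃ a : Fin 0 → ℕ, v = x₀ + ∑ i, a i • e i from
        fun h => hv (by obtain ⟨a, ha⟩ := h; simpa using ha)), if_neg hv]
  | succ m IH =>
    intro x₀ e he
    have hsplit : ∏ s, (1 - AddMonoidAlgebra.single (e s) (1:ℚ)) =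
        (∏ s : Fin m, (1 - AddMonoidAlgebra.single ((e ∘ Fin.succ) s) (1:ℚ))) *
          (1 - AddMonoidAlgebra.single (e 0) (1:ℚ)) := by
      rw [Fin.prod_univ_succ]
      simp only [Function.comp_apply]
      ring
    rw [hsplit, actQ_mul, actQ_peel x₀ e he,
      IH x₀ (e ∘ Fin.succ) (he.comp Fin.succ (Fin.succ_injective m))]

open Classical in
lemma sum_indicator_disjoint {k : ℕ} (S : Fin k → Set V)
    (hd : ∀ i i', i ≠ i' → Disjoint (S i) (S i')) (v : V) :
    ∑ i, (if v ∈ S i then (1:ℚ) else 0) = if v ∈ ⋃ i, S i then 1 else 0 := by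
  classical
  by_cases hv : v ∈ ⋃ i, S i
  · obtain ⟨i₀, hi₀⟩ := Set.mem_iUnion.mp hv
    rw [if_pos hv, Finset.sum_eq_single i₀]
    · rw [if_pos hi₀]
    · intro i _ hi
      rw [if_neg (fun h => (Set.disjoint_left.mp (hd i i₀ hi) h) hi₀)]
    · intro h; exact absurd (Finset.mem_univ i₀) h
  · rw [if_neg hv, Finset.sum_eq_zero]
    intro i _
    rw [if_neg (fun h => hv (Set.mem_iUnion.mpr ⟨i, h⟩))]

end Aux2

section Aux3
variable {V : Type*} [AddCommGroup V] [Module ℚ V]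

lemma one_sub_single_ne_zero {u : V} (hu : u ≠ 0) :
    (1 : AddMonoidAlgebra ℚ V) - AddMonoidAlgebra.single u 1 ≠ 0 := by
  intro h
  have h2 : (((1 : AddMonoidAlgebra ℚ V) - AddMonoidAlgebra.single u 1 : AddMonoidAlgebra ℚ V)).coeff u = -1 := by
    rw [AddMonoidAlgebra.coeff_sub, Finsupp.sub_apply, AddMonoidAlgebra.one_def,
      AddMonoidAlgebra.coeff_single, AddMonoidAlgebra.coeff_single,
      Finsupp.single_eq_of_ne' (fun h0 => hu h0.symm), Finsupp.single_eq_same]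
    norm_num
  rw [h] at h2
  simp at h2

end Aux3

/-- If two finite pairwise-disjoint families of simple sectors in a finite-dimensional
ℚ-vector space `V` have the same union, then the corresponding sums
`∑ᵢ S(x₀⁽ⁱ⁾; e⁽ⁱ⁾)` agree in the fraction field `ℚ(V)` of the group algebra `ℚ[V]`. -/
theorem Sfrac_sum_eq_of_union_eq
    (V : Type*) [AddCommGroup V] [Module ℚ V] [FiniteDimensional ℚ V]
    (k l : ℕ) (x : Fin k → V) (n : Fin k → ℕ) (e : (i : Fin k) → Fin (n i) → V)
    (y : Fin l → V) (p : Fin l → ℕ) (f : (j : Fin l) → Fin (p j) → V)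
    (he : ∀ i, LinearIndependent ℚ (e i)) (hf : ∀ j, LinearIndependent ℚ (f j))
    (hdx : ∀ i i', i ≠ i' → Disjoint (simpleSector (x i) (e i)) (simpleSector (x i') (e i')))
    (hdy : ∀ j j', j ≠ j' → Disjoint (simpleSector (y j) (f j)) (simpleSector (y j') (f j')))
    (hunion : (⋃ i, simpleSector (x i) (e i)) = ⋃ j, simpleSector (y j) (f j)) :
    ∑ i, Sfrac (x i) (e i) = ∑ j, Sfrac (y j) (f j) := by
  classical
  set κ := algebraMap (AddMonoidAlgebra ℚ V) (FractionRing (AddMonoidAlgebra ℚ V)) with hκ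
  set Q : Fin k → AddMonoidAlgebra ℚ V :=
    fun i => ∏ s, (1 - AddMonoidAlgebra.single (e i s) 1) with hQdef
  set Rr : Fin l → AddMonoidAlgebra ℚ V :=
    fun j => ∏ t, (1 - AddMonoidAlgebra.single (f j t) 1) with hRdef
  have hQne : ∀ i, Q i ≠ 0 := fun i =>
    Finset.prod_ne_zero_iff.mpr fun s _ => one_sub_single_ne_zero ((he i).ne_zero s)
  have hRne : ∀ j, Rr j ≠ 0 := fun j =>
    Finset.prod_ne_zero_iff.mpr fun t _ => one_sub_single_ne_zero ((hf j).ne_zero t)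
  set Tq : Fin k → AddMonoidAlgebra ℚ V :=
    fun i => (∏ i' ∈ Finset.univ.erase i, Q i') * ∏ j, Rr j with hTqdef
  set Uq : Fin l → AddMonoidAlgebra ℚ V :=
    fun j => (∏ j' ∈ Finset.univ.erase j, Rr j') * ∏ i, Q i with hUqdef
  set FullT : AddMonoidAlgebra ℚ V := (∏ i, Q i) * ∏ j, Rr j with hFdef
  have hFT : ∀ i, FullT = Q i * Tq i := by
    intro i
    rw [hFdef, hTqdef, ← Finset.mul_prod_erase Finset.univ Q (Finset.mem_univ i), mul_assoc]
  have hFU : ∀ j, FullT = Rr j * Uq j := by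
    intro j
    rw [hFdef, hUqdef, ← Finset.mul_prod_erase Finset.univ Rr (Finset.mem_univ j)]
    ring
  have hFne : FullT ≠ 0 := by
    rw [hFdef]
    exact mul_ne_zero (Finset.prod_ne_zero_iff.mpr fun i _ => hQne i)
      (Finset.prod_ne_zero_iff.mpr fun j _ => hRne j)
  have hκinj : Function.Injective κ :=
    IsFractionRing.injective (AddMonoidAlgebra ℚ V) (FractionRing (AddMonoidAlgebra ℚ V))
  -- the key identity in the group algebra
  have chainL : ∀ i, actQ (AddMonoidAlgebra.single (x i) (1:ℚ) * Tq i) (deltaQ 0)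
      = actQ FullT (indS (x i) (e i)) := by
    intro i
    rw [mul_comm, actQ_mul, actQ_single_delta, ← actQ_prod_ind (x i) (e i) (he i),
      ← actQ_mul]
    congr 1
    rw [show (∏ s, ((1:AddMonoidAlgebra ℚ V) - AddMonoidAlgebra.single (e i s) 1)) = Q i from rfl,
      mul_comm, ← hFT i]
  have chainR : ∀ j, actQ (AddMonoidAlgebra.single (y j) (1:ℚ) * Uq j) (deltaQ 0)
      = actQ FullT (indS (y j) (f j)) := by
    intro j
    rw [mul_comm, actQ_mul, actQ_single_delta, ← actQ_prod_ind (y j) (f j) (hf j),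
      ← actQ_mul]
    congr 1
    rw [show (∏ t, ((1:AddMonoidAlgebra ℚ V) - AddMonoidAlgebra.single (f j t) 1)) = Rr j from rfl,
      mul_comm, ← hFU j]
  have hind : (fun w => ∑ i, indS (x i) (e i) w) = (fun w => ∑ j, indS (y j) (f j) w) := by
    funext w
    simp only [indS]
    rw [sum_indicator_disjoint _ hdx w, sum_indicator_disjoint _ hdy w, hunion]
  have key : ∑ i, AddMonoidAlgebra.single (x i) (1:ℚ) * Tq i
      = ∑ j, AddMonoidAlgebra.single (y j) (1:ℚ) * Uq j := by
    apply AddMonoidAlgebra.ext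
    apply Finsupp.ext
    intro v
    rw [AddMonoidAlgebra.coeff_sum, AddMonoidAlgebra.coeff_sum, Finsupp.finset_sum_apply, Finsupp.finset_sum_apply]
    have hc : ∀ (r : AddMonoidAlgebra ℚ V), r.coeff v = actQ r (deltaQ 0) v :=
      fun r => (congrFun (actQ_coeff r) v).symm
    calc ∑ i, (AddMonoidAlgebra.single (x i) (1:ℚ) * Tq i).coeff v
        = ∑ i, actQ FullT (indS (x i) (e i)) v := by
          refine Finset.sum_congr rfl fun i _ => ?_
          rw [hc, chainL i]
      _ = actQ FullT (fun w => ∑ i, indS (x i) (e i) w) v := (actQ_sum_right _ _ _ v).symm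
      _ = actQ FullT (fun w => ∑ j, indS (y j) (f j) w) v := by rw [hind]
      _ = ∑ j, actQ FullT (indS (y j) (f j)) v := actQ_sum_right _ _ _ v
      _ = ∑ j, (AddMonoidAlgebra.single (y j) (1:ℚ) * Uq j).coeff v := by
          refine Finset.sum_congr rfl fun j _ => ?_
          rw [hc, chainR j]
  -- transfer to the fraction field
  have hSfx : ∀ i, Sfrac (x i) (e i) = κ (AddMonoidAlgebra.single (x i) 1) / κ (Q i) := by
    intro i
    rw [Sfrac, hQdef]
    simp only [map_prod, map_sub, map_one, hκ]
  have hSfy : ∀ j, Sfrac (y j) (f j) = κ (AddMonoidAlgebra.single (y j) 1) / κ (Rr j) := by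
    intro j
    rw [Sfrac, hRdef]
    simp only [map_prod, map_sub, map_one, hκ]
  apply mul_right_cancel₀ (b := κ FullT) ((map_ne_zero_iff κ hκinj).mpr hFne)
  rw [Finset.sum_mul, Finset.sum_mul]
  have hL : ∑ i, Sfrac (x i) (e i) * κ FullT = κ (∑ i, AddMonoidAlgebra.single (x i) (1:ℚ) * Tq i) := by
    rw [map_sum]
    refine Finset.sum_congr rfl fun i _ => ?_
    rw [hSfx i, hFT i, map_mul, ← mul_assoc, div_mul_cancel₀ _ ((map_ne_zero_iff κ hκinj).mpr (hQne i)), ← map_mul]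
  have hR : ∑ j, Sfrac (y j) (f j) * κ FullT = κ (∑ j, AddMonoidAlgebra.single (y j) (1:ℚ) * Uq j) := by
    rw [map_sum]
    refine Finset.sum_congr rfl fun j _ => ?_
    rw [hSfy j, hFU j, map_mul, ← mul_assoc, div_mul_cancel₀ _ ((map_ne_zero_iff κ hκinj).mpr (hRne j)), ← map_mul]
  rw [hL, hR, key]
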